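/- (Lemma 1, defender's best response.) Let p_D ∈ (0,1), q_D > 0, α ∈ (0,1], γ ∈ [0,1], and define g(β) = (p_D(1−γ)² + q_D β² + γ²)·(α/(α+β))² for β ∈ (0,1]. Let β̄ = (p_D(1−γ)² + γ²)/(q_D α). If β̄ < 1, then g(β̄) ≤ g(β) for all β ∈ (0,1]; if β̄ ≥ 1, then g(1) ≤ g(β) for all β ∈ (0,1]. -/

import Mathlib

/-- Lemma 1, defender's best response. -/
theorem defender_best_response (pD qD α γ : ℝ)
    (hpD : pD ∈ Set.Ioo (0:ℝ) 1) (hqD : 0 < qD)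
    (hα : α ∈ Set.Ioc (0:ℝ) 1) (hγ : γ ∈ Set.Icc (0:ℝ) 1)
    (g : ℝ → ℝ)
    (hg : ∀ β, g β = (pD * (1 - γ) ^ 2 + qD * β ^ 2 + γ ^ 2) * (α / (α + β)) ^ 2)
    (βbar : ℝ) (hβbar : βbar = (pD * (1 - γ) ^ 2 + γ ^ 2) / (qD * α)) :
    (βbar < 1 → ∀ β ∈ Set.Ioc (0:ℝ) 1, g βbar ≤ g β) ∧
    (1 ≤ βbar → ∀ β ∈ Set.Ioc (0:ℝ) 1, g 1 ≤ g β) := by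
  obtain ⟨hp0, hp1⟩ := hpD
  obtain ⟨ha0, ha1⟩ := hα
  obtain ⟨hg0, hg1⟩ := hγ
  have hqa : 0 < qD * α := mul_pos hqD ha0
  have hcpos : 0 < pD * (1 - γ) ^ 2 + γ ^ 2 := by
    rcases le_or_gt γ (1/2) with h | h
    · nlinarith [mul_pos hp0 (show (0:ℝ) < (1 - γ) ^ 2 by nlinarith), sq_nonneg γ]
    · nlinarith [mul_nonneg hp0.le (sq_nonneg (1 - γ))]
  have hceq : pD * (1 - γ) ^ 2 = qD * α * βbar - γ ^ 2 := by
    rw [hβbar]; field_simp; ring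
  have hbbar0 : 0 < βbar := by
    rw [hβbar]; positivity
  constructor
  · intro hlt β hβ
    obtain ⟨hb0, hb1⟩ := hβ
    have h1 : (0:ℝ) < (α + βbar) ^ 2 := by positivity
    have h2 : (0:ℝ) < (α + β) ^ 2 := by positivity
    rw [hg, hg, div_pow, div_pow, ← mul_div_assoc, ← mul_div_assoc,
      div_le_div_iff₀ h1 h2, hceq]
    nlinarith [mul_nonneg (mul_nonneg (mul_nonneg hqa.le (sq_nonneg (β - βbar)))
        (add_pos ha0 hbbar0).le) (sq_nonneg α)]
  · intro hge β hβ
    obtain ⟨hb0, hb1⟩ := hβ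
    have h1 : (0:ℝ) < (α + 1) ^ 2 := by positivity
    have h2 : (0:ℝ) < (α + β) ^ 2 := by positivity
    rw [hg, hg, div_pow, div_pow, ← mul_div_assoc, ← mul_div_assoc,
      div_le_div_iff₀ h1 h2, hceq]
    nlinarith [mul_nonneg (mul_nonneg (mul_nonneg hqa.le (sq_nonneg (1 - β)))
        (by linarith : (0:ℝ) ≤ α + 1)) (sq_nonneg α),
      mul_nonneg (mul_nonneg (mul_nonneg (mul_nonneg hqa.le
        (by linarith : (0:ℝ) ≤ 1 - β)) (by linarith : (0:ℝ) ≤ βbar - 1))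
        (by linarith : (0:ℝ) ≤ 2 * α + 1 + β)) (sq_nonneg α)]
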